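/- Let G¹ = (1/2)·I + Σ_i γ_i σ_i and H¹ = (1/2)·I + Σ_i ζ_i σ_i be positive 2×2 Hermitian matrices written in the Pauli basis, with all ζ_i ≠ 0. Then there exist probabilities p_0, p_1, p_2, p_3 ≥ 0 summing to 1 with Σ_k p_k σ_k H¹ σ_k = G¹ if and only if, setting r_i = γ_i/ζ_i, the inequalities 1 + r_1 − r_2 − r_3 ≥ 0, 1 − r_1 + r_2 − r_3 ≥ 0, 1 − r_1 − r_2 + r_3 ≥ 0, and 1 + r_1 + r_2 + r_3 ≥ 0 all hold; in that case p_i = (1/4)(1 + r_i − r_j − r_k) for {i,j,k} = {1,2,3} and p_0 = (1/4)(1 + r_1 + r_2 + r_3). -/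
import Mathlib


open scoped ComplexOrder

/-- The Pauli matrices `σ₀ = I, σ₁, σ₂, σ₃`. -/
noncomputable def pauli : Fin 4 → Matrix (Fin 2) (Fin 2) ℂ :=
  ![1, !![0, 1; 1, 0], !![0, -Complex.I; Complex.I, 0], !![1, 0; 0, -1]]

/-- `Gmat a b c = (1/2)·I + a σ₁ + b σ₂ + c σ₃`, a Hermitian matrix in the Pauli
basis with real coefficients. -/
noncomputable def Gmat (a b c : ℝ) : Matrix (Fin 2) (Fin 2) ℂ :=
  (1 / 2 : ℂ) • 1 + (a : ℂ) • pauli 1 + (b : ℂ) • pauli 2 + (c : ℂ) • pauli 3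

lemma key (p : Fin 4 → ℝ) (hs : ∑ k, p k = 1) (z1 z2 z3 : ℝ) :
    ∑ k, (p k : ℂ) • (pauli k * Gmat z1 z2 z3 * pauli k)
      = Gmat ((p 0 + p 1 - p 2 - p 3)*z1) ((p 0 - p 1 + p 2 - p 3)*z2)
          ((p 0 - p 1 - p 2 + p 3)*z3) := by
  have h0 : p 0 = 1 - p 1 - p 2 - p 3 := by
    rw [Fin.sum_univ_four] at hs; linarith
  have hI3 : Complex.I ^ 3 = -Complex.I := by
    rw [(by norm_num : (3:ℕ) = 2 + 1), pow_add, Complex.I_sq]; ring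
  ext i j
  fin_cases i <;> fin_cases j <;>
    simp [Gmat, pauli, Fin.sum_univ_four, Matrix.mul_apply, Fin.sum_univ_two,
      Matrix.vecMul, Matrix.vecHead, Matrix.vecTail, dotProduct,
      Matrix.one_apply, h0] <;> push_cast <;> ring_nf <;>
    simp only [Complex.I_sq, hI3] <;> ring

lemma Gmat_inj {a b c a' b' c' : ℝ} (h : Gmat a b c = Gmat a' b' c') :
    a = a' ∧ b = b' ∧ c = c' := by
  have h00 := congrFun (congrFun h 0) 0
  have h10 := congrFun (congrFun h 1) 0
  simp [Gmat, pauli, Matrix.one_apply] at h00 h10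
  have hab : Complex.mk a b = Complex.mk a' b' := by
    rw [Complex.mk_eq_add_mul_I, Complex.mk_eq_add_mul_I]; exact_mod_cast h10
  rw [Complex.ext_iff] at hab
  exact ⟨hab.1, hab.2, h00⟩

/-- Let `G¹ = (1/2)I + Σ γ_i σ_i` and `H¹ = (1/2)I + Σ ζ_i σ_i` be positive Hermitian
matrices with all `ζ_i ≠ 0`. There exist probabilities `p₀,…,p₃` with
`Σ_k p_k σ_k H¹ σ_k = G¹` iff, with `r_i = γ_i/ζ_i`, the four inequalities
`1 + r₁ − r₂ − r₃ ≥ 0`, `1 − r₁ + r₂ − r₃ ≥ 0`, `1 − r₁ − r₂ + r₃ ≥ 0`,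
`1 + r₁ + r₂ + r₃ ≥ 0` hold; in that case the probabilities are uniquely
`p_i = (1 + r_i − r_j − r_k)/4` and `p₀ = (1 + r₁ + r₂ + r₃)/4`. -/
theorem stmt18 (g1 g2 g3 z1 z2 z3 : ℝ)
    (hz1 : z1 ≠ 0) (hz2 : z2 ≠ 0) (hz3 : z3 ≠ 0)
    (hG : (Gmat g1 g2 g3).PosDef) (hH : (Gmat z1 z2 z3).PosDef) :
    ((∃ p : Fin 4 → ℝ, (∀ k, 0 ≤ p k) ∧ (∑ k, p k = 1) ∧
        (∑ k, (p k : ℂ) • (pauli k * Gmat z1 z2 z3 * pauli k)) = Gmat g1 g2 g3) ↔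
      (1 + g1 / z1 - g2 / z2 - g3 / z3 ≥ 0 ∧ 1 - g1 / z1 + g2 / z2 - g3 / z3 ≥ 0 ∧
        1 - g1 / z1 - g2 / z2 + g3 / z3 ≥ 0 ∧ 1 + g1 / z1 + g2 / z2 + g3 / z3 ≥ 0)) ∧
    (∀ p : Fin 4 → ℝ, (∀ k, 0 ≤ p k) → (∑ k, p k = 1) →
      (∑ k, (p k : ℂ) • (pauli k * Gmat z1 z2 z3 * pauli k)) = Gmat g1 g2 g3 →
      p 0 = (1 + g1 / z1 + g2 / z2 + g3 / z3) / 4 ∧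
      p 1 = (1 + g1 / z1 - g2 / z2 - g3 / z3) / 4 ∧
      p 2 = (1 - g1 / z1 + g2 / z2 - g3 / z3) / 4 ∧
      p 3 = (1 - g1 / z1 - g2 / z2 + g3 / z3) / 4) := by
  have main : ∀ p : Fin 4 → ℝ, (∑ k, p k = 1) →
      (∑ k, (p k : ℂ) • (pauli k * Gmat z1 z2 z3 * pauli k)) = Gmat g1 g2 g3 →
      p 0 + p 1 - p 2 - p 3 = g1 / z1 ∧ p 0 - p 1 + p 2 - p 3 = g2 / z2 ∧
        p 0 - p 1 - p 2 + p 3 = g3 / z3 := by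
    intro p hs he
    rw [key p hs] at he
    obtain ⟨h1, h2, h3⟩ := Gmat_inj he
    exact ⟨(eq_div_iff hz1).2 h1, (eq_div_iff hz2).2 h2, (eq_div_iff hz3).2 h3⟩
  constructor
  · constructor
    · rintro ⟨p, hp, hs, he⟩
      obtain ⟨e1, e2, e3⟩ := main p hs he
      rw [Fin.sum_univ_four] at hs
      have := hp 0; have := hp 1; have := hp 2; have := hp 3
      refine ⟨by linarith, by linarith, by linarith, by linarith⟩
    · rintro ⟨h1, h2, h3, h4⟩
      refine ⟨![(1 + g1/z1 + g2/z2 + g3/z3)/4, (1 + g1/z1 - g2/z2 - g3/z3)/4,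
        (1 - g1/z1 + g2/z2 - g3/z3)/4, (1 - g1/z1 - g2/z2 + g3/z3)/4], ?_, ?_, ?_⟩
      · intro k; fin_cases k <;> simp <;> linarith
      · rw [Fin.sum_univ_four]; simp; ring
      · have hs : ∑ k, ![(1 + g1/z1 + g2/z2 + g3/z3)/4, (1 + g1/z1 - g2/z2 - g3/z3)/4,
            (1 - g1/z1 + g2/z2 - g3/z3)/4, (1 - g1/z1 - g2/z2 + g3/z3)/4] k = 1 := by
          rw [Fin.sum_univ_four]; simp; ring
        rw [key _ hs]
        simp only [Matrix.cons_val_zero, Matrix.cons_val_one, Matrix.head_cons,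
          Matrix.cons_val_two, Matrix.tail_cons, Matrix.cons_val_three]
        have E1 : ((1 + g1/z1 + g2/z2 + g3/z3)/4 + (1 + g1/z1 - g2/z2 - g3/z3)/4
            - (1 - g1/z1 + g2/z2 - g3/z3)/4 - (1 - g1/z1 - g2/z2 + g3/z3)/4) * z1 = g1 := by
          field_simp; ring
        have E2 : ((1 + g1/z1 + g2/z2 + g3/z3)/4 - (1 + g1/z1 - g2/z2 - g3/z3)/4
            + (1 - g1/z1 + g2/z2 - g3/z3)/4 - (1 - g1/z1 - g2/z2 + g3/z3)/4) * z2 = g2 := by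
          field_simp; ring
        have E3 : ((1 + g1/z1 + g2/z2 + g3/z3)/4 - (1 + g1/z1 - g2/z2 - g3/z3)/4
            - (1 - g1/z1 + g2/z2 - g3/z3)/4 + (1 - g1/z1 - g2/z2 + g3/z3)/4) * z3 = g3 := by
          field_simp; ring
        rw [E1, E2, E3]
  · intro p hp hs he
    obtain ⟨e1, e2, e3⟩ := main p hs he
    rw [Fin.sum_univ_four] at hs
    refine ⟨by linarith, by linarith, by linarith, by linarith⟩
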